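/- Suppose φ satisfies Assumption (A) with s > d. Then there exists a₀ ∈ (0, r₀] such that for every 0 < a ≤ a₀ one has v₀(a) < ∞ and A(a) := (b(a) − 2v₀(a))/4 > 0, and every finite configuration γ ⊂ ℝ^d satisfies the strong superstability inequality U(γ) ≥ A(a) · Σ_{Δ∈Δ̄_a : |γ_Δ|≥2} |γ_Δ|² − (v₀(a)/2)·|γ|. -/

import Mathlib

open MeasureTheory Filter Topology Set
open scoped BigOperators ENNReal NNReal

noncomputable section

attribute [local instance] Classical.propDecidable

/-- Points of `ℝ^d` (Euclidean space). -/
abbrev Pt (d : ℕ) : Type := EuclideanSpace ℝ (Fin d)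

/-- The index `r ∈ ℤ^d` of the cube `Δ_a(r)` of the partition `Δ̄_a` containing `x`:
for `a > 0` we have `cubeIdx d a x = r ↔ ∀ i, a*(r i - 1/2) ≤ x i ∧ x i < a*(r i + 1/2)`. -/
def cubeIdx (d : ℕ) (a : ℝ) (x : Pt d) : Fin d → ℤ := fun i => ⌊x i / a + 1/2⌋

/-- `φ⁺(t) = max {0, φ(t)}`. -/
def phiPlus (φ : ℝ → ℝ) (t : ℝ) : ℝ := max (φ t) 0

/-- `φ⁻(t) = -min {0, φ(t)}`. -/
def phiMinus (φ : ℝ → ℝ) (t : ℝ) : ℝ := max (-(φ t)) 0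

/-- Energy `U(γ) = Σ_{{x,y}⊂γ} φ(|x-y|)` of a finite configuration. -/
def energy (d : ℕ) (φ : ℝ → ℝ) (γ : Finset (Pt d)) : ℝ :=
  (∑ p ∈ γ.offDiag, φ (dist p.1 p.2)) / 2

/-- Interaction energy `W(η;γ) = Σ_{x∈η} Σ_{y∈γ} φ(|x-y|)`. -/
def interW (d : ℕ) (φ : ℝ → ℝ) (η γ : Finset (Pt d)) : ℝ :=
  ∑ x ∈ η, ∑ y ∈ γ, φ (dist x y)

/-- Number of points of `γ` in the cube `Δ_a(r)`, i.e. `|γ_Δ|`. -/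
def cubeCount (d : ℕ) (a : ℝ) (γ : Finset (Pt d)) (r : Fin d → ℤ) : ℕ :=
  (γ.filter fun x => cubeIdx d a x = r).card

/-- `Σ_{Δ ∈ Δ̄_a : |γ_Δ| ≥ 2} |γ_Δ|²`. -/
def densSum (d : ℕ) (a : ℝ) (γ : Finset (Pt d)) : ℝ :=
  ∑ r ∈ γ.image (cubeIdx d a),
    if 2 ≤ cubeCount d a γ r then (cubeCount d a γ r : ℝ) ^ 2 else 0

/-- `b(a) = inf {φ⁺(|x-y|) : x ≠ y lie in one common cube of Δ̄_a}`. -/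
def bVal (d : ℕ) (φ : ℝ → ℝ) (a : ℝ) : ℝ :=
  sInf {t : ℝ | ∃ x y : Pt d, x ≠ y ∧ cubeIdx d a x = cubeIdx d a y ∧ t = phiPlus φ (dist x y)}

/-- `v₀(a) = Σ_{Δ'∈Δ̄_a} sup_{x∈Δ₀} sup_{y∈Δ'} φ⁻(|x-y|)` (valued in `ℝ≥0∞`). -/
def v0E (d : ℕ) (φ : ℝ → ℝ) (a : ℝ) : ℝ≥0∞ :=
  ∑' r : Fin d → ℤ,
    ⨆ x ∈ {x : Pt d | cubeIdx d a x = 0}, ⨆ y ∈ {y : Pt d | cubeIdx d a y = r},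
      ENNReal.ofReal (phiMinus φ (dist x y))

/-- Real value of `v₀(a)`. -/
def v0Val (d : ℕ) (φ : ℝ → ℝ) (a : ℝ) : ℝ := (v0E d φ a).toReal

/-- Assumption (A) on the interaction potential. -/
structure AssumptionA (d : ℕ) (φ : ℝ → ℝ) (r₀ R φ₀ φ₁ ε₀ s : ℝ) : Prop where
  cont : ContinuousOn φ (Set.Ioi (0 : ℝ))
  r0_pos : 0 < r₀
  R_gt : r₀ < R
  phi0_pos : 0 < φ₀
  phi1_pos : 0 < φ₁
  eps0_pos : 0 < ε₀
  s_ge : (d : ℝ) ≤ s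
  decay : ∀ t : ℝ, R ≤ t → -(φ₁ / t ^ ((d : ℝ) + ε₀)) ≤ φ t
  core : ∀ t : ℝ, 0 < t → t ≤ r₀ → φ₀ / t ^ s ≤ φ t

/-- `χ₋^a(γ) = 1` iff no cube of `Δ̄_a` contains two or more points of `γ`. -/
def chiM (d : ℕ) (a : ℝ) (γ : Finset (Pt d)) : ℝ :=
  if ∀ x ∈ γ, ∀ y ∈ γ, cubeIdx d a x = cubeIdx d a y → x = y then 1 else 0

/-- The finite configuration `{y₁,…,y_n}`. -/
def confOf {d n : ℕ} (y : Fin n → Pt d) : Finset (Pt d) := Finset.image y Finset.univ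

/-- Weighted grand partition function `1 + Σ_{n≥1} (zⁿ/n!) ∫_{Λⁿ} e^{-βU({x₁,…,xₙ})} w({x₁,…,xₙ})`. -/
def ZW (d : ℕ) (φ : ℝ → ℝ) (z β : ℝ) (Λ : Set (Pt d)) (w : Finset (Pt d) → ℝ) : ℝ :=
  1 + ∑' n : ℕ, (z ^ (n + 1) / (n + 1).factorial) *
    ∫ y in {y : Fin (n + 1) → Pt d | ∀ i, y i ∈ Λ},
      Real.exp (-β * energy d φ (confOf y)) * w (confOf y)

/-- Grand partition function `Z_Λ(z,β)`. -/
def ZΛ (d : ℕ) (φ : ℝ → ℝ) (z β : ℝ) (Λ : Set (Pt d)) : ℝ := ZW d φ z β Λ fun _ => 1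

/-- Dilute (quasi-lattice approximated) partition function `Z_Λ^{(-)}(z,β,a)`. -/
def ZΛm (d : ℕ) (φ : ℝ → ℝ) (z β a : ℝ) (Λ : Set (Pt d)) : ℝ := ZW d φ z β Λ (chiM d a)

/-- `Σ_{n≥0} (zⁿ/n!) ∫_{Λⁿ} e^{-βU(η∪{y₁,…,y_n})} w(η∪{y₁,…,y_n})`. -/
def corrInt (d : ℕ) (φ : ℝ → ℝ) (z β : ℝ) (Λ : Set (Pt d)) (η : Finset (Pt d))
    (w : Finset (Pt d) → ℝ) : ℝ :=
  Real.exp (-β * energy d φ η) * w η +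
  ∑' n : ℕ, (z ^ (n + 1) / (n + 1).factorial) *
    ∫ y in {y : Fin (n + 1) → Pt d | ∀ i, y i ∈ Λ},
      Real.exp (-β * energy d φ (η ∪ confOf y)) * w (η ∪ confOf y)

/-- Finite-volume correlation function `ρ_Λ(η;z,β)`. -/
def rhoΛ (d : ℕ) (φ : ℝ → ℝ) (z β : ℝ) (Λ : Set (Pt d)) (η : Finset (Pt d)) : ℝ :=
  z ^ η.card / ZΛ d φ z β Λ * corrInt d φ z β Λ η fun _ => 1

/-- Approximated correlation function `ρ_Λ^{(-)}(η;z,β,a)`. -/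
def rhoΛm (d : ℕ) (φ : ℝ → ℝ) (z β a : ℝ) (Λ : Set (Pt d)) (η : Finset (Pt d)) : ℝ :=
  z ^ η.card / ZΛm d φ z β a Λ * corrInt d φ z β Λ η (chiM d a)

/-- `ε₁(a)`. -/
def eps1 (d : ℕ) (φ : ℝ → ℝ) (z β a : ℝ) : ℝ :=
  1/2 * z^2 * a^(2*d) * Real.exp (-β * (bVal d φ a - 5 * v0Val d φ a)) *
    Real.exp (z * a^d * Real.exp (-β * (bVal d φ a - 3 * v0Val d φ a)))

/-- The cube `[-L/2, L/2)^d`. -/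
def boxHalf (d : ℕ) (L : ℝ) : Set (Pt d) := {x | ∀ i, -(L/2) ≤ x i ∧ x i < L/2}

/-- The cube `Λ_l = [-a(l+1/2), a(l+1/2))^d`, a union of cubes of `Δ̄_a`. -/
def boxLat (d : ℕ) (a : ℝ) (l : ℕ) : Set (Pt d) :=
  {x | ∀ i, -(a*(l+1/2)) ≤ x i ∧ x i < a*(l+1/2)}


section Aux

lemma phiPlus_nonneg (φ : ℝ → ℝ) (t : ℝ) : 0 ≤ phiPlus φ t := le_max_right _ _

lemma phiMinus_nonneg (φ : ℝ → ℝ) (t : ℝ) : 0 ≤ phiMinus φ t := le_max_right _ _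

lemma phi_decomp (φ : ℝ → ℝ) (t : ℝ) : φ t = phiPlus φ t - phiMinus φ t := by
  unfold phiPlus phiMinus
  rcases le_total (φ t) 0 with h | h
  · rw [max_eq_right h, max_eq_left (by linarith)]; ring
  · rw [max_eq_left h, max_eq_right (by linarith)]; ring

lemma cubeIdx_coord {d : ℕ} {a : ℝ} (ha : 0 < a) {x : Pt d} {r : Fin d → ℤ}
    (h : cubeIdx d a x = r) (i : Fin d) :
    a * r i - a / 2 ≤ x i ∧ x i < a * r i + a / 2 := by
  have hi := congrFun h i
  simp only [cubeIdx] at hi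
  rw [Int.floor_eq_iff] at hi
  obtain ⟨h1, h2⟩ := hi
  have hxa : x i = a * (x i / a) := by field_simp
  constructor <;> nlinarith [mul_le_mul_of_nonneg_left h1 ha.le,
    mul_le_mul_of_nonneg_left h2.le ha.le]

lemma coord_le_dist {d : ℕ} (x y : Pt d) (i : Fin d) : |x i - y i| ≤ dist x y := by
  rw [EuclideanSpace.dist_eq, ← Real.sqrt_sq_eq_abs]
  apply Real.sqrt_le_sqrt
  have h : (x i - y i) ^ 2 = dist (x i) (y i) ^ 2 := by rw [Real.dist_eq, sq_abs]
  rw [h]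
  exact Finset.single_le_sum (f := fun j => dist (x j) (y j) ^ 2)
    (fun j _ => sq_nonneg _) (Finset.mem_univ i)

lemma dist_le_same_cube {d : ℕ} {a : ℝ} (ha : 0 < a) {x y : Pt d}
    (h : cubeIdx d a x = cubeIdx d a y) : dist x y ≤ a * Real.sqrt d := by
  rw [EuclideanSpace.dist_eq]
  have key : ∀ i, dist (x i) (y i) ^ 2 ≤ a ^ 2 := by
    intro i
    obtain ⟨hx1, hx2⟩ := cubeIdx_coord ha (rfl : cubeIdx d a x = cubeIdx d a x) i
    obtain ⟨hy1, hy2⟩ := cubeIdx_coord ha h.symm i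
    rw [Real.dist_eq, sq_abs]
    nlinarith
  calc Real.sqrt (∑ i, dist (x i) (y i) ^ 2) ≤ Real.sqrt (∑ _i : Fin d, a ^ 2) :=
        Real.sqrt_le_sqrt (Finset.sum_le_sum fun i _ => key i)
    _ = a * Real.sqrt d := by
        rw [Finset.sum_const, Finset.card_univ, Fintype.card_fin, nsmul_eq_mul,
          Real.sqrt_mul (by positivity), Real.sqrt_sq ha.le]; ring

lemma dist_ge_coord {d : ℕ} {a : ℝ} (ha : 0 < a) {x y : Pt d} {q : Fin d → ℤ}
    (hx : cubeIdx d a x = 0) (hy : cubeIdx d a y = q) (i : Fin d) :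
    a * max ((|q i| : ℝ) - 1) 0 ≤ dist x y := by
  obtain ⟨hx1, hx2⟩ := cubeIdx_coord ha hx i
  obtain ⟨hy1, hy2⟩ := cubeIdx_coord ha hy i
  simp only [Pi.zero_apply, Int.cast_zero, mul_zero] at hx1 hx2
  have habs : a * ((|q i| : ℝ) - 1) ≤ |x i - y i| := by
    have h1 : |(a * q i : ℝ)| ≤ |a * q i - y i| + |y i - x i| + |x i| := by
      have e : (a * (q i : ℝ)) = a * q i - y i + (y i - x i) + x i := by ring
      calc |(a * (q i : ℝ))| = |a * q i - y i + (y i - x i) + x i| := by rw [← e]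
        _ ≤ |a * (q i : ℝ) - y i + (y i - x i)| + |x i| := abs_add_le _ _
        _ ≤ |a * (q i : ℝ) - y i| + |y i - x i| + |x i| := by
            gcongr; exact abs_add_le _ _
    have h2 : |(a * q i : ℝ)| = a * |(q i : ℝ)| := by
      rw [abs_mul, abs_of_pos ha]
    have h3 : |a * (q i : ℝ) - y i| ≤ a / 2 := by
      rw [abs_le]; constructor <;> [linarith; linarith]
    have h4 : |x i| ≤ a / 2 := by rw [abs_le]; constructor <;> linarith
    have h5 : |y i - x i| = |x i - y i| := abs_sub_comm _ _
    nlinarith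
  rw [mul_max_of_nonneg _ _ ha.le, mul_zero]
  exact max_le (habs.trans ((coord_le_dist x y i))) dist_nonneg

/-- Shift point `(a * r i)_i`. -/
def shiftPt (d : ℕ) (a : ℝ) (r : Fin d → ℤ) : Pt d :=
  (WithLp.equiv 2 (Fin d → ℝ)).symm fun i => a * r i

lemma cubeIdx_sub_shift {d : ℕ} {a : ℝ} (ha : 0 < a) (x : Pt d) (r : Fin d → ℤ) :
    cubeIdx d a (x - shiftPt d a r) = cubeIdx d a x - r := by
  funext i
  have hsub : (x - shiftPt d a r) i = x i - a * r i := rfl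
  simp only [cubeIdx, Pi.sub_apply, hsub]
  have h : (x i - a * r i) / a + 1 / 2 = x i / a + 1 / 2 + ((-(r i) : ℤ) : ℝ) := by
    push_cast; field_simp; ring
  rw [h, Int.floor_add_intCast]
  push_cast; ring

end Aux

/-- The `q`-th summand of `v0E`. -/
def Wterm (d : ℕ) (φ : ℝ → ℝ) (a : ℝ) (q : Fin d → ℤ) : ℝ≥0∞ :=
  ⨆ x ∈ {x : Pt d | cubeIdx d a x = 0}, ⨆ y ∈ {y : Pt d | cubeIdx d a y = q},
    ENNReal.ofReal (phiMinus φ (dist x y))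

lemma v0E_eq_tsum_Wterm (d : ℕ) (φ : ℝ → ℝ) (a : ℝ) :
    v0E d φ a = ∑' q : Fin d → ℤ, Wterm d φ a q := rfl

lemma ofReal_phiMinus_le_Wterm {d : ℕ} {φ : ℝ → ℝ} {a : ℝ} (ha : 0 < a)
    {x y : Pt d} {r r' : Fin d → ℤ} (hx : cubeIdx d a x = r) (hy : cubeIdx d a y = r') :
    ENNReal.ofReal (phiMinus φ (dist x y)) ≤ Wterm d φ a (r' - r) := by
  set c := shiftPt d a r with hc
  have hx' : cubeIdx d a (x - c) = 0 := by rw [cubeIdx_sub_shift ha, hx, sub_self]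
  have hy' : cubeIdx d a (y - c) = r' - r := by rw [cubeIdx_sub_shift ha, hy]
  have hdist : dist (x - c) (y - c) = dist x y := dist_sub_right x y c
  have heq : ENNReal.ofReal (phiMinus φ (dist x y))
      = ENNReal.ofReal (phiMinus φ (dist (x - c) (y - c))) := by rw [hdist]
  rw [heq]
  exact le_iSup₂_of_le (x - c) hx' (le_iSup₂_of_le (y - c) hy' le_rfl)

lemma superstab_core {d : ℕ} {φ : ℝ → ℝ} {a : ℝ} (ha : 0 < a)
    (hv : v0E d φ a ≠ ⊤) (γ : Finset (Pt d)) :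
    (bVal d φ a - 2 * v0Val d φ a) / 4 * densSum d a γ - v0Val d φ a / 2 * γ.card
      ≤ energy d φ γ := by
  classical
  set b := bVal d φ a with hbdef
  set v := v0Val d φ a with hvdef
  have hbdd : BddBelow {t : ℝ | ∃ x y : Pt d, x ≠ y ∧ cubeIdx d a x = cubeIdx d a y ∧
      t = phiPlus φ (dist x y)} := ⟨0, by rintro t ⟨x, y, _, _, rfl⟩; exact phiPlus_nonneg φ _⟩
  have hb0 : 0 ≤ b := Real.sInf_nonneg (by rintro t ⟨x, y, _, _, rfl⟩; exact phiPlus_nonneg φ _)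
  have hv0 : 0 ≤ v := ENNReal.toReal_nonneg
  set S := γ.image (cubeIdx d a) with hS
  set Γ := fun r => γ.filter (fun x => cubeIdx d a x = r) with hΓ
  have hWne : ∀ q, Wterm d φ a q ≠ ⊤ := fun q =>
    ne_top_of_le_ne_top hv (by rw [v0E_eq_tsum_Wterm]; exact ENNReal.le_tsum q)
  set Wt := fun q => (Wterm d φ a q).toReal with hWt
  have hWt0 : ∀ q, 0 ≤ Wt q := fun q => ENNReal.toReal_nonneg
  have hpair : ∀ x y : Pt d, phiMinus φ (dist x y) ≤ Wt (cubeIdx d a y - cubeIdx d a x) := by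
    intro x y
    have h := ofReal_phiMinus_le_Wterm (φ := φ) ha (x := x) (y := y) rfl rfl
    have h2 := ENNReal.toReal_mono (hWne _) h
    rwa [ENNReal.toReal_ofReal (phiMinus_nonneg φ _)] at h2
  have hsumW : ∀ (T : Finset (Fin d → ℤ)) (σ : (Fin d → ℤ) → Fin d → ℤ),
      Function.Injective σ → ∑ q ∈ T, Wt (σ q) ≤ v := by
    intro T σ hσ
    have h1 : ∑ q ∈ T, Wt (σ q) = ∑ q ∈ T.image σ, Wt q :=
      (Finset.sum_image (fun x _ y _ h => hσ h)).symm
    rw [h1, hvdef, v0Val, ← ENNReal.toReal_sum (fun q _ => hWne q)]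
    exact ENNReal.toReal_mono hv (by rw [v0E_eq_tsum_Wterm]; exact ENNReal.sum_le_tsum _)
  set n := fun r => cubeCount d a γ r with hn
  have hΓcard : ∀ r, (Γ r).card = n r := fun r => rfl
  have hmem : ∀ r ∈ S, 1 ≤ n r := by
    intro r hr
    obtain ⟨x, hx, hxr⟩ := Finset.mem_image.1 hr
    exact Finset.card_pos.2 ⟨x, Finset.mem_filter.2 ⟨hx, hxr⟩⟩
  -- Step B : lower bound by positive part on common cubes
  have stepB : ∑ r ∈ S, b * ((n r : ℝ) ^ 2 - n r) ≤
      ∑ p ∈ γ.offDiag, phiPlus φ (dist p.1 p.2) := by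
    have hsub : S.biUnion (fun r => (Γ r).offDiag) ⊆ γ.offDiag := by
      intro p hp
      obtain ⟨r, hr, hpr⟩ := Finset.mem_biUnion.1 hp
      rw [Finset.mem_offDiag] at hpr ⊢
      exact ⟨(Finset.mem_filter.1 hpr.1).1, (Finset.mem_filter.1 hpr.2.1).1, hpr.2.2⟩
    have hdisj : (↑S : Set (Fin d → ℤ)).PairwiseDisjoint (fun r => (Γ r).offDiag) := by
      intro r _ r' _ hne
      rw [Function.onFun, Finset.disjoint_left]
      intro p hp hp'
      rw [Finset.mem_offDiag] at hp hp'
      exact hne ((Finset.mem_filter.1 hp.1).2.symm.trans (Finset.mem_filter.1 hp'.1).2)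
    calc ∑ r ∈ S, b * ((n r : ℝ) ^ 2 - n r)
        ≤ ∑ r ∈ S, ∑ p ∈ (Γ r).offDiag, phiPlus φ (dist p.1 p.2) := by
          apply Finset.sum_le_sum
          intro r hr
          have hle : n r ≤ n r * n r := Nat.le_mul_of_pos_left _ (hmem r hr)
          have hcard : (((Γ r).offDiag.card : ℕ) : ℝ) = (n r : ℝ) ^ 2 - n r := by
            rw [Finset.offDiag_card, hΓcard, Nat.cast_sub hle]
            push_cast; ring
          have hlow : ∀ p ∈ (Γ r).offDiag, b ≤ phiPlus φ (dist p.1 p.2) := by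
            intro p hp
            rw [Finset.mem_offDiag] at hp
            refine csInf_le hbdd ⟨p.1, p.2, hp.2.2, ?_, rfl⟩
            rw [(Finset.mem_filter.1 hp.1).2, (Finset.mem_filter.1 hp.2.1).2]
          have h := Finset.card_nsmul_le_sum ((Γ r).offDiag) _ b hlow
          rw [nsmul_eq_mul, hcard] at h
          linarith
      _ = ∑ p ∈ S.biUnion (fun r => (Γ r).offDiag), phiPlus φ (dist p.1 p.2) :=
          (Finset.sum_biUnion hdisj).symm
      _ ≤ ∑ p ∈ γ.offDiag, phiPlus φ (dist p.1 p.2) :=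
          Finset.sum_le_sum_of_subset_of_nonneg hsub (fun p _ _ => phiPlus_nonneg φ _)
  -- Step C : upper bound on negative part
  have stepC : ∑ p ∈ γ.offDiag, phiMinus φ (dist p.1 p.2) ≤ ∑ r ∈ S, (n r : ℝ) ^ 2 * v := by
    have c1 : ∑ p ∈ γ.offDiag, phiMinus φ (dist p.1 p.2) ≤
        ∑ x ∈ γ, ∑ y ∈ γ, phiMinus φ (dist x y) := by
      rw [← Finset.sum_product']
      apply Finset.sum_le_sum_of_subset_of_nonneg
      · intro p hp
        rw [Finset.mem_offDiag] at hp
        exact Finset.mem_product.2 ⟨hp.1, hp.2.1⟩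
      · intros; exact phiMinus_nonneg φ _
    have c2 : ∑ x ∈ γ, ∑ y ∈ γ, phiMinus φ (dist x y)
        = ∑ r ∈ S, ∑ x ∈ Γ r, ∑ r' ∈ S, ∑ y ∈ Γ r', phiMinus φ (dist x y) := by
      rw [← Finset.sum_fiberwise_of_maps_to (g := cubeIdx d a)
        (fun x hx => Finset.mem_image_of_mem _ hx)
        (fun x => ∑ y ∈ γ, phiMinus φ (dist x y))]
      refine Finset.sum_congr rfl fun r _ => Finset.sum_congr rfl fun x _ => ?_
      rw [← Finset.sum_fiberwise_of_maps_to (g := cubeIdx d a)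
        (fun y hy => Finset.mem_image_of_mem _ hy)
        (fun y => phiMinus φ (dist x y))]
    have c3 : ∀ r ∈ S, ∀ r' ∈ S, ∑ x ∈ Γ r, ∑ y ∈ Γ r', phiMinus φ (dist x y)
        ≤ (n r : ℝ) * (n r') * Wt (r' - r) := by
      intro r hr r' hr'
      have inner : ∀ x ∈ Γ r, ∑ y ∈ Γ r', phiMinus φ (dist x y)
          ≤ (n r' : ℝ) * Wt (r' - r) := by
        intro x hx
        have hterm : ∀ y ∈ Γ r', phiMinus φ (dist x y) ≤ Wt (r' - r) := by
          intro y hy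
          have h := hpair x y
          rwa [(Finset.mem_filter.1 hx).2, (Finset.mem_filter.1 hy).2] at h
        calc ∑ y ∈ Γ r', phiMinus φ (dist x y) ≤ (Γ r').card • Wt (r' - r) :=
              Finset.sum_le_card_nsmul _ _ _ hterm
          _ = (n r' : ℝ) * Wt (r' - r) := by rw [hΓcard, nsmul_eq_mul]
      calc ∑ x ∈ Γ r, ∑ y ∈ Γ r', phiMinus φ (dist x y)
          ≤ (Γ r).card • ((n r' : ℝ) * Wt (r' - r)) := Finset.sum_le_card_nsmul _ _ _ inner
        _ = (n r : ℝ) * (n r') * Wt (r' - r) := by rw [hΓcard, nsmul_eq_mul]; ring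
    have c4 : ∑ r ∈ S, ∑ r' ∈ S, (n r : ℝ) * (n r') * Wt (r' - r)
        ≤ ∑ r ∈ S, (n r : ℝ) ^ 2 * v := by
      have split : ∀ r r' : Fin d → ℤ, (n r : ℝ) * (n r') * Wt (r' - r)
          ≤ (n r : ℝ)^2 / 2 * Wt (r' - r) + (n r' : ℝ)^2 / 2 * Wt (r' - r) := by
        intro r r'
        nlinarith [hWt0 (r' - r), sq_nonneg ((n r : ℝ) - (n r' : ℝ))]
      have first : ∑ r ∈ S, ∑ r' ∈ S, (n r : ℝ)^2 / 2 * Wt (r' - r)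
          ≤ ∑ r ∈ S, (n r : ℝ)^2 / 2 * v := by
        apply Finset.sum_le_sum
        intro r _
        rw [← Finset.mul_sum]
        exact mul_le_mul_of_nonneg_left
          (hsumW S (fun q => q - r) (fun u w h => by simpa using congrArg (· + r) h))
          (by positivity)
      have second : ∑ r ∈ S, ∑ r' ∈ S, (n r' : ℝ)^2 / 2 * Wt (r' - r)
          ≤ ∑ r' ∈ S, (n r' : ℝ)^2 / 2 * v := by
        rw [Finset.sum_comm]
        apply Finset.sum_le_sum
        intro r' _
        rw [← Finset.mul_sum]
        exact mul_le_mul_of_nonneg_left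
          (hsumW S (fun q => r' - q) (fun u w h => by simpa using h))
          (by positivity)
      calc ∑ r ∈ S, ∑ r' ∈ S, (n r : ℝ) * (n r') * Wt (r' - r)
          ≤ ∑ r ∈ S, ∑ r' ∈ S, ((n r : ℝ)^2 / 2 * Wt (r' - r) + (n r' : ℝ)^2 / 2 * Wt (r' - r)) :=
            Finset.sum_le_sum fun r _ => Finset.sum_le_sum fun r' _ => split r r'
        _ = (∑ r ∈ S, ∑ r' ∈ S, (n r : ℝ)^2 / 2 * Wt (r' - r))
            + ∑ r ∈ S, ∑ r' ∈ S, (n r' : ℝ)^2 / 2 * Wt (r' - r) := by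
            rw [← Finset.sum_add_distrib]
            exact Finset.sum_congr rfl fun r _ => Finset.sum_add_distrib
        _ ≤ (∑ r ∈ S, (n r : ℝ)^2 / 2 * v) + ∑ r' ∈ S, (n r' : ℝ)^2 / 2 * v :=
            add_le_add first second
        _ = ∑ r ∈ S, (n r : ℝ)^2 * v := by
            rw [← Finset.sum_add_distrib]
            exact Finset.sum_congr rfl fun r _ => by ring
    calc ∑ p ∈ γ.offDiag, phiMinus φ (dist p.1 p.2)
        ≤ ∑ x ∈ γ, ∑ y ∈ γ, phiMinus φ (dist x y) := c1
      _ = ∑ r ∈ S, ∑ x ∈ Γ r, ∑ r' ∈ S, ∑ y ∈ Γ r', phiMinus φ (dist x y) := c2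
      _ = ∑ r ∈ S, ∑ r' ∈ S, ∑ x ∈ Γ r, ∑ y ∈ Γ r', phiMinus φ (dist x y) :=
          Finset.sum_congr rfl fun r _ => Finset.sum_comm
      _ ≤ ∑ r ∈ S, ∑ r' ∈ S, (n r : ℝ) * (n r') * Wt (r' - r) :=
          Finset.sum_le_sum fun r hr => Finset.sum_le_sum fun r' hr' => c3 r hr r' hr'
      _ ≤ ∑ r ∈ S, (n r : ℝ) ^ 2 * v := c4
  -- assemble
  have hsplitU : ∑ p ∈ γ.offDiag, φ (dist p.1 p.2)
      = ∑ p ∈ γ.offDiag, phiPlus φ (dist p.1 p.2)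
        - ∑ p ∈ γ.offDiag, phiMinus φ (dist p.1 p.2) := by
    rw [← Finset.sum_sub_distrib]
    exact Finset.sum_congr rfl fun p _ => phi_decomp φ _
  have hU : ∑ r ∈ S, (b * ((n r : ℝ)^2 - n r) - (n r : ℝ)^2 * v)
      ≤ ∑ p ∈ γ.offDiag, φ (dist p.1 p.2) := by
    rw [hsplitU]
    exact le_trans (le_of_eq (Finset.sum_sub_distrib _ _)) (sub_le_sub stepB stepC)
  have hcardγ : (γ.card : ℝ) = ∑ r ∈ S, (n r : ℝ) := by
    rw [Finset.card_eq_sum_card_image (cubeIdx d a) γ]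
    push_cast
    rfl
  have hdens : densSum d a γ = ∑ r ∈ S, (if 2 ≤ n r then (n r : ℝ)^2 else 0) := rfl
  have hperr : ∀ r ∈ S, (b - 2*v)/4 * (if 2 ≤ n r then (n r : ℝ)^2 else 0) - v/2 * (n r : ℝ)
      ≤ (b * ((n r : ℝ)^2 - n r) - (n r : ℝ)^2 * v)/2 := by
    intro r hr
    by_cases h2 : 2 ≤ n r
    · rw [if_pos h2]
      have h2' : (2:ℝ) ≤ (n r : ℝ) := by exact_mod_cast h2
      nlinarith [sq_nonneg ((n r : ℝ) - 2), mul_nonneg hb0 (mul_nonneg (sub_nonneg.2 h2') (Nat.cast_nonneg (n r)))]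
    · rw [if_neg h2]
      have h1 : n r = 1 := le_antisymm (by omega) (hmem r hr)
      rw [h1]
      push_cast
      nlinarith [hv0]
  show _ ≤ energy d φ γ
  unfold energy
  rw [hdens, hcardγ]
  calc (b - 2*v)/4 * (∑ r ∈ S, (if 2 ≤ n r then (n r : ℝ)^2 else 0))
        - v/2 * (∑ r ∈ S, (n r : ℝ))
      = ∑ r ∈ S, ((b - 2*v)/4 * (if 2 ≤ n r then (n r : ℝ)^2 else 0) - v/2 * (n r : ℝ)) := by
        rw [Finset.mul_sum, Finset.mul_sum, ← Finset.sum_sub_distrib]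
    _ ≤ ∑ r ∈ S, (b * ((n r : ℝ)^2 - n r) - (n r : ℝ)^2 * v)/2 := Finset.sum_le_sum hperr
    _ = (∑ r ∈ S, (b * ((n r : ℝ)^2 - n r) - (n r : ℝ)^2 * v))/2 := by rw [Finset.sum_div]
    _ ≤ (∑ p ∈ γ.offDiag, φ (dist p.1 p.2))/2 := by linarith

lemma tsum_pi_pow (g : ℤ → ℝ≥0∞) : ∀ n : ℕ,
    ∑' r : Fin n → ℤ, ∏ i, g (r i) = (∑' k : ℤ, g k) ^ n := by
  intro n
  induction n with
  | zero =>
    rw [pow_zero]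
    have h1 : ∀ r : Fin 0 → ℤ, ∏ i, g (r i) = 1 := fun r => by simp
    rw [tsum_congr h1]
    exact tsum_eq_single (default : Fin 0 → ℤ)
      (fun b hb => (hb (Subsingleton.elim b default)).elim)
  | succ n ih =>
    rw [← Equiv.tsum_eq (Fin.consEquiv (fun _ : Fin (n+1) => ℤ))
      (fun r => ∏ i, g (r i)), ENNReal.tsum_prod']
    have h2 : ∀ (k : ℤ) (v : Fin n → ℤ),
        ∏ i, g (((Fin.consEquiv (fun _ : Fin (n+1) => ℤ)) (k, v)) i)
          = g k * ∏ i, g (v i) := by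
      intro k v
      rw [Fin.prod_univ_succ]
      simp [Fin.consEquiv]
    calc ∑' (k : ℤ) (v : Fin n → ℤ),
          ∏ i, g (((Fin.consEquiv (fun _ : Fin (n+1) => ℤ)) (k, v)) i)
        = ∑' (k : ℤ), ∑' (v : Fin n → ℤ), g k * ∏ i, g (v i) :=
          tsum_congr fun k => tsum_congr fun v => h2 k v
      _ = ∑' (k : ℤ), g k * ∑' (v : Fin n → ℤ), ∏ i, g (v i) :=
          tsum_congr fun k => ENNReal.tsum_mul_left
      _ = (∑' k, g k) ^ (n + 1) := by
          rw [ih, ENNReal.tsum_mul_right, pow_succ]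
          ring

lemma phiMinus_decay {d : ℕ} {φ : ℝ → ℝ} {r₀ R φ₀ φ₁ ε₀ s : ℝ}
    (hA : AssumptionA d φ r₀ R φ₀ φ₁ ε₀ s) {ε : ℝ} (hε : 0 < ε) (hεε : ε ≤ ε₀) :
    ∃ K : ℝ, 0 < K ∧ ∀ t : ℝ, 0 < t → phiMinus φ t ≤ K * (1 + t) ^ (-((d:ℝ) + ε)) := by
  have hr0 : 0 < r₀ := hA.r0_pos
  have hR : 0 < R := lt_trans hr0 hA.R_gt
  obtain ⟨M, hM⟩ := (isCompact_Icc (a := r₀) (b := R)).exists_bound_of_continuousOn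
    (hA.cont.mono fun t ht => lt_of_lt_of_le hr0 ht.1)
  set e := (d:ℝ) + ε with he
  have he0 : 0 < e := by positivity
  set A := (|M| + 1) * (1 + R) ^ e with hA1
  set B := φ₁ * R ^ (-(ε₀ - ε)) * (1 + 1/R) ^ e with hB1
  refine ⟨|A| + |B| + 1, by have := abs_nonneg A; have := abs_nonneg B; linarith, ?_⟩
  intro t ht
  have h1t : (0:ℝ) < 1 + t := by linarith
  have hpow : 0 < (1 + t) ^ (-e) := Real.rpow_pos_of_pos h1t _
  rcases le_or_gt t r₀ with hcase | hcase
  · have hcore := hA.core t ht hcase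
    have hts : 0 < t ^ s := Real.rpow_pos_of_pos ht s
    have hphi : 0 < φ t := lt_of_lt_of_le (div_pos hA.phi0_pos hts) hcore
    have hzero : phiMinus φ t = 0 := by unfold phiMinus; rw [max_eq_right]; linarith
    rw [hzero]; positivity
  rcases le_or_gt t R with hcase2 | hcase2
  · have hMt := hM t ⟨hcase.le, hcase2⟩
    rw [Real.norm_eq_abs] at hMt
    have h2 : phiMinus φ t ≤ |M| := by
      unfold phiMinus
      apply max_le _ (abs_nonneg M)
      calc -(φ t) ≤ |φ t| := neg_le_abs _
        _ ≤ M := hMt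
        _ ≤ |M| := le_abs_self M
    have hmon : (1 + R) ^ (-e) ≤ (1 + t) ^ (-e) :=
      Real.rpow_le_rpow_of_nonpos h1t (by linarith) (by linarith)
    have h3 : (1:ℝ) ≤ (1 + R) ^ e * (1 + t) ^ (-e) := by
      calc (1:ℝ) = (1 + R) ^ e * (1 + R) ^ (-e) := by
            rw [← Real.rpow_add (by linarith)]; simp
        _ ≤ (1 + R) ^ e * (1 + t) ^ (-e) :=
            mul_le_mul_of_nonneg_left hmon (Real.rpow_nonneg (by linarith) _)
    have hAge : |M| * (1 + R) ^ e ≤ |A| + |B| + 1 := by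
      have hRe : (0:ℝ) ≤ (1 + R) ^ e := Real.rpow_nonneg (by linarith) _
      have h4 : |M| * (1 + R) ^ e ≤ A := by rw [hA1]; nlinarith [abs_nonneg M]
      calc |M| * (1 + R) ^ e ≤ A := h4
        _ ≤ |A| := le_abs_self A
        _ ≤ |A| + |B| + 1 := by linarith [abs_nonneg B]
    calc phiMinus φ t ≤ |M| := h2
      _ ≤ |M| * ((1 + R) ^ e * (1 + t) ^ (-e)) := le_mul_of_one_le_right (abs_nonneg M) h3
      _ = (|M| * (1 + R) ^ e) * (1 + t) ^ (-e) := by ring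
      _ ≤ (|A| + |B| + 1) * (1 + t) ^ (-e) := mul_le_mul_of_nonneg_right hAge hpow.le
  · have hphi := hA.decay t hcase2.le
    have hRe' : (0:ℝ) ≤ R ^ (-(ε₀ - ε)) := Real.rpow_nonneg hR.le _
    have h2 : phiMinus φ t ≤ (φ₁ * R ^ (-(ε₀ - ε))) * t ^ (-e) := by
      unfold phiMinus
      apply max_le
      · have hexp : -((d:ℝ) + ε₀) = (-e) + (-(ε₀ - ε)) := by rw [he]; ring
        have htR : t ^ (-(ε₀ - ε)) ≤ R ^ (-(ε₀ - ε)) :=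
          Real.rpow_le_rpow_of_nonpos hR hcase2.le (by linarith)
        calc -(φ t) ≤ φ₁ / t ^ ((d:ℝ) + ε₀) := by linarith
          _ = φ₁ * t ^ (-((d:ℝ) + ε₀)) := by
              rw [Real.rpow_neg ht.le]; ring
          _ = φ₁ * (t ^ (-e) * t ^ (-(ε₀ - ε))) := by
              rw [hexp, Real.rpow_add ht]
          _ ≤ φ₁ * (t ^ (-e) * R ^ (-(ε₀ - ε))) := by
              apply mul_le_mul_of_nonneg_left _ hA.phi1_pos.le
              exact mul_le_mul_of_nonneg_left htR (Real.rpow_nonneg ht.le _)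
          _ = (φ₁ * R ^ (-(ε₀ - ε))) * t ^ (-e) := by ring
      · exact mul_nonneg (mul_nonneg hA.phi1_pos.le hRe') (Real.rpow_nonneg ht.le _)
    have h3 : t ^ (-e) ≤ (1 + 1/R) ^ e * (1 + t) ^ (-e) := by
      have hc0 : (0:ℝ) < R / (1 + R) * (1 + t) := mul_pos (div_pos hR (by linarith)) h1t
      have hc : R / (1 + R) * (1 + t) ≤ t := by
        rw [div_mul_eq_mul_div, div_le_iff₀ (by linarith)]
        nlinarith
      have hmono : t ^ (-e) ≤ (R / (1 + R) * (1 + t)) ^ (-e) :=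
        Real.rpow_le_rpow_of_nonpos hc0 hc (by linarith)
      have hsplit : (R / (1 + R) * (1 + t)) ^ (-e)
          = (R / (1 + R)) ^ (-e) * (1 + t) ^ (-e) :=
        Real.mul_rpow (by positivity) (by linarith)
      have hinv : (R / (1 + R)) ^ (-e) = (1 + 1/R) ^ e := by
        rw [Real.rpow_neg (div_pos hR (by linarith)).le,
          ← Real.inv_rpow (div_pos hR (by linarith)).le, inv_div]
        congr 1
        rw [add_div, div_self hR.ne']
        ring
      rw [hsplit, hinv] at hmono
      exact hmono
    have hBle : φ₁ * R ^ (-(ε₀ - ε)) * (1 + 1/R) ^ e ≤ |A| + |B| + 1 := by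
      calc φ₁ * R ^ (-(ε₀ - ε)) * (1 + 1/R) ^ e = B := by rw [hB1]
        _ ≤ |B| := le_abs_self B
        _ ≤ |A| + |B| + 1 := by linarith [abs_nonneg A]
    calc phiMinus φ t ≤ (φ₁ * R ^ (-(ε₀ - ε))) * t ^ (-e) := h2
      _ ≤ (φ₁ * R ^ (-(ε₀ - ε))) * ((1 + 1/R) ^ e * (1 + t) ^ (-e)) :=
          mul_le_mul_of_nonneg_left h3 (mul_nonneg hA.phi1_pos.le hRe')
      _ = (φ₁ * R ^ (-(ε₀ - ε)) * (1 + 1/R) ^ e) * (1 + t) ^ (-e) := by ring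
      _ ≤ (|A| + |B| + 1) * (1 + t) ^ (-e) := mul_le_mul_of_nonneg_right hBle hpow.le

lemma v0E_le_bound {d : ℕ} {φ : ℝ → ℝ} {ε K : ℝ} (hd : 1 ≤ d) (hε : 0 < ε) (hK : 0 < K)
    (hbound : ∀ t : ℝ, 0 < t → phiMinus φ t ≤ K * (1 + t) ^ (-((d:ℝ) + ε))) :
    ∃ C : ℝ, 0 < C ∧ ∀ a : ℝ, 0 < a → a ≤ 1 →
      v0E d φ a ≤ ENNReal.ofReal (C * a ^ (-((d:ℝ) + ε))) := by
  have hd0 : (0:ℝ) < d := by exact_mod_cast hd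
  set p := 1 + ε / (d:ℝ) with hp
  have hp1 : 1 < p := by rw [hp]; nlinarith [div_pos hε hd0]
  have hp0 : 0 < p := by linarith
  -- one-dimensional comparison function and its sum
  set f : ℤ → ℝ := fun k => if k = 0 then (1:ℝ) else |(k:ℝ)| ^ (-p) with hf
  have hf0 : ∀ k, 0 ≤ f k := by
    intro k
    rw [hf]
    dsimp only
    split
    · norm_num
    · exact Real.rpow_nonneg (abs_nonneg _) _
  have hfsummable : Summable f := by
    have h1 : Summable fun k : ℤ => |(k:ℝ)| ^ (-p) := Real.summable_abs_int_rpow hp1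
    have h2 : Summable fun k : ℤ => if k = 0 then (1:ℝ) else 0 := by
      apply summable_of_finite_support
      apply (Set.finite_singleton (0:ℤ)).subset
      intro k hk
      simp only [Function.mem_support] at hk
      by_contra hne
      simp only [Set.mem_singleton_iff] at hne
      exact hk (if_neg hne)
    have := h1.add h2
    apply this.congr
    intro k
    rw [hf]
    dsimp only
    by_cases hk : k = 0
    · subst hk; norm_num [Real.zero_rpow (by linarith : -p ≠ 0)]
    · rw [if_neg hk, if_neg hk, add_zero]
  set Sr := ∑' k : ℤ, f k with hSr
  have hSr0 : 0 ≤ Sr := tsum_nonneg hf0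
  have hphi0 : 0 ≤ phiMinus φ 0 := phiMinus_nonneg φ 0
  refine ⟨phiMinus φ 0 + K * (2 ^ ((d:ℝ) + ε) * Sr ^ d) + 1, by positivity, ?_⟩
  intro a ha ha1
  set e := (d:ℝ) + ε with he
  have he0 : 0 < e := by positivity
  -- the one-dimensional factor
  set gr : ℤ → ℝ := fun k => (1 + a * max ((|k| : ℝ) - 1) 0) ^ (-p) with hgr
  have hgrpos : ∀ k, (0:ℝ) < 1 + a * max ((|k| : ℝ) - 1) 0 := by
    intro k
    have : (0:ℝ) ≤ max ((|k| : ℝ) - 1) 0 := le_max_right _ _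
    nlinarith
  have hgr0 : ∀ k, 0 ≤ gr k := fun k => Real.rpow_nonneg (hgrpos k).le _
  -- step (i) : per-cube bound
  have stepi : ∀ q : Fin d → ℤ, Wterm d φ a q ≤
      (if q = 0 then ENNReal.ofReal (phiMinus φ 0) else 0)
        + ENNReal.ofReal (K * ∏ i, gr (q i)) := by
    intro q
    refine iSup₂_le fun x hx => iSup₂_le fun y hy => ?_
    have hx' : cubeIdx d a x = 0 := hx
    have hy' : cubeIdx d a y = q := hy
    rcases eq_or_ne x y with heq | hne
    · subst heq
      have hq0 : q = 0 := by rw [← hy', hx']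
      rw [if_pos hq0, dist_self]
      exact le_self_add
    · have hdist : 0 < dist x y := dist_pos.2 hne
      have h1 := hbound _ hdist
      have hfac : ∀ i, (1 + dist x y) ^ (-p) ≤ gr (q i) := by
        intro i
        apply Real.rpow_le_rpow_of_nonpos (hgrpos (q i))
        · have := dist_ge_coord (q := q) ha hx' hy' i
          linarith
        · linarith
      have h2 : (1 + dist x y) ^ (-e) ≤ ∏ i, gr (q i) := by
        have hb0 : (0:ℝ) < 1 + dist x y := by linarith
        have hprod : (1 + dist x y) ^ (-e) = ∏ _i : Fin d, (1 + dist x y) ^ (-p) := by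
          rw [Finset.prod_const, Finset.card_univ, Fintype.card_fin,
            ← Real.rpow_natCast ((1 + dist x y) ^ (-p)) d, ← Real.rpow_mul hb0.le]
          have hpd : p * (d:ℝ) = e := by rw [hp, he]; field_simp; try ring
          congr 1
          rw [← hpd]
          ring
        rw [hprod]
        exact Finset.prod_le_prod (fun i _ => Real.rpow_nonneg hb0.le _)
          (fun i _ => hfac i)
      have h3 : phiMinus φ (dist x y) ≤ K * ∏ i, gr (q i) :=
        h1.trans (mul_le_mul_of_nonneg_left h2 hK.le)
      exact le_add_left (ENNReal.ofReal_le_ofReal h3)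
  -- step (iii) : one-dimensional sum bound
  have hcomp : ∀ k : ℤ, gr k ≤ (2/a) ^ p * f k := by
    intro k
    rw [hf]
    dsimp only
    by_cases hk : k = 0
    · subst hk
      rw [if_pos rfl, mul_one]
      have hgr00 : gr 0 = 1 := by
        rw [hgr]
        norm_num
      rw [hgr00]
      calc (1:ℝ) = 1 ^ p := (Real.one_rpow _).symm
        _ ≤ (2/a) ^ p := Real.rpow_le_rpow (by norm_num)
            (by rw [le_div_iff₀ ha]; linarith) hp0.le
    · rw [if_neg hk]
      have hk1 : (1:ℝ) ≤ |(k:ℝ)| := by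
        rw [← Int.cast_abs]
        exact_mod_cast Int.one_le_abs (by exact_mod_cast hk)
      have hmax : max ((|k| : ℝ) - 1) 0 = (|(k:ℝ)|) - 1 := by
        rw [max_eq_left (by linarith)]
      have hbase : (a/2) * |(k:ℝ)| ≤ 1 + a * max ((|k| : ℝ) - 1) 0 := by
        rw [hmax]; nlinarith
      have hbpos : (0:ℝ) < (a/2) * |(k:ℝ)| := by
        apply mul_pos (by linarith); linarith
      have hmono : gr k ≤ ((a/2) * |(k:ℝ)|) ^ (-p) :=
        Real.rpow_le_rpow_of_nonpos hbpos hbase (by linarith)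
      have hsplit : ((a/2) * |(k:ℝ)|) ^ (-p) = (2/a) ^ p * |(k:ℝ)| ^ (-p) := by
        rw [Real.mul_rpow (by linarith) (abs_nonneg _)]
        congr 1
        rw [Real.rpow_neg (by linarith : (0:ℝ) ≤ a/2),
          ← Real.inv_rpow (by linarith : (0:ℝ) ≤ a/2), inv_div]
      rw [hsplit] at hmono
      exact hmono
  have hsum1 : ∑' k : ℤ, ENNReal.ofReal (gr k)
      ≤ ENNReal.ofReal ((2/a) ^ p * Sr) := by
    calc ∑' k : ℤ, ENNReal.ofReal (gr k)
        ≤ ∑' k : ℤ, ENNReal.ofReal ((2/a) ^ p * f k) :=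
          ENNReal.tsum_le_tsum fun k => ENNReal.ofReal_le_ofReal (hcomp k)
      _ = ∑' k : ℤ, ENNReal.ofReal ((2/a) ^ p) * ENNReal.ofReal (f k) :=
          tsum_congr fun k => ENNReal.ofReal_mul (Real.rpow_nonneg (by positivity) _)
      _ = ENNReal.ofReal ((2/a) ^ p) * ∑' k : ℤ, ENNReal.ofReal (f k) :=
          ENNReal.tsum_mul_left
      _ = ENNReal.ofReal ((2/a) ^ p) * ENNReal.ofReal Sr := by
          rw [hSr, ENNReal.ofReal_tsum_of_nonneg hf0 hfsummable]
      _ = ENNReal.ofReal ((2/a) ^ p * Sr) :=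
          (ENNReal.ofReal_mul (Real.rpow_nonneg (by positivity) _)).symm
  -- combine
  have hv : v0E d φ a ≤ ENNReal.ofReal (phiMinus φ 0 + K * ((2/a) ^ p * Sr) ^ d) := by
    calc v0E d φ a = ∑' q : Fin d → ℤ, Wterm d φ a q := v0E_eq_tsum_Wterm d φ a
      _ ≤ ∑' q : Fin d → ℤ, ((if q = 0 then ENNReal.ofReal (phiMinus φ 0) else 0)
            + ENNReal.ofReal (K * ∏ i, gr (q i))) :=
          ENNReal.tsum_le_tsum stepi
      _ = (∑' q : Fin d → ℤ, if q = 0 then ENNReal.ofReal (phiMinus φ 0) else 0)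
            + ∑' q : Fin d → ℤ, ENNReal.ofReal (K * ∏ i, gr (q i)) := ENNReal.tsum_add
      _ = ENNReal.ofReal (phiMinus φ 0)
            + ∑' q : Fin d → ℤ, ENNReal.ofReal (K * ∏ i, gr (q i)) := by
          congr 1
          exact (tsum_eq_single (0 : Fin d → ℤ) fun b hb => if_neg hb).trans (if_pos rfl)
      _ = ENNReal.ofReal (phiMinus φ 0)
            + ENNReal.ofReal K * ∑' q : Fin d → ℤ, ∏ i, ENNReal.ofReal (gr (q i)) := by
          congr 1
          rw [← ENNReal.tsum_mul_left]
          refine tsum_congr fun q => ?_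
          rw [ENNReal.ofReal_mul hK.le, ENNReal.ofReal_prod_of_nonneg fun i _ => hgr0 (q i)]
      _ = ENNReal.ofReal (phiMinus φ 0)
            + ENNReal.ofReal K * (∑' k : ℤ, ENNReal.ofReal (gr k)) ^ d := by
          rw [tsum_pi_pow (fun k => ENNReal.ofReal (gr k)) d]
      _ ≤ ENNReal.ofReal (phiMinus φ 0)
            + ENNReal.ofReal K * (ENNReal.ofReal ((2/a) ^ p * Sr)) ^ d := by
          gcongr
      _ = ENNReal.ofReal (phiMinus φ 0 + K * ((2/a) ^ p * Sr) ^ d) := by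
          rw [← ENNReal.ofReal_pow (by positivity), ← ENNReal.ofReal_mul hK.le,
            ← ENNReal.ofReal_add hphi0 (by positivity)]
  refine hv.trans (ENNReal.ofReal_le_ofReal ?_)
  -- real-number bound
  have hone : (1:ℝ) ≤ a ^ (-e) :=
    Real.one_le_rpow_of_pos_of_le_one_of_nonpos ha ha1 (by linarith)
  have hpow : ((2/a) ^ p * Sr) ^ d = 2 ^ e * Sr ^ d * a ^ (-e) := by
    rw [mul_pow, ← Real.rpow_natCast ((2/a) ^ p) d, ← Real.rpow_mul (by positivity)]
    have hpd : p * ((d:ℕ):ℝ) = e := by rw [hp, he]; field_simp; try ring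
    rw [hpd, Real.div_rpow (by norm_num) ha.le, Real.rpow_neg ha.le, div_eq_mul_inv]
    ring
  rw [hpow]
  have h1 : phiMinus φ 0 ≤ phiMinus φ 0 * a ^ (-e) :=
    le_mul_of_one_le_right hphi0 hone
  have h2 : (0:ℝ) ≤ a ^ (-e) := by linarith
  nlinarith [mul_nonneg (mul_nonneg hK.le (by positivity : (0:ℝ) ≤ 2 ^ e * Sr ^ d)) h2]

lemma bVal_ge {d : ℕ} {φ : ℝ → ℝ} {r₀ R φ₀ φ₁ ε₀ s : ℝ}
    (hd : 1 ≤ d) (hA : AssumptionA d φ r₀ R φ₀ φ₁ ε₀ s) {a : ℝ} (ha : 0 < a)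
    (haR : a * Real.sqrt d ≤ r₀) :
    φ₀ * Real.sqrt d ^ (-s) * a ^ (-s) ≤ bVal d φ a := by
  have hd0 : (0:ℝ) < d := by exact_mod_cast hd
  have hsd : (0:ℝ) < Real.sqrt d := Real.sqrt_pos.2 hd0
  apply le_csInf
  · refine ⟨_, (WithLp.equiv 2 (Fin d → ℝ)).symm (fun _ => 0),
      (WithLp.equiv 2 (Fin d → ℝ)).symm (fun _ => a/4), ?_, ?_, rfl⟩
    · intro h
      have h0 := congrArg (fun z : Pt d => z ⟨0, hd⟩) h
      have : (0:ℝ) = a/4 := h0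
      linarith
    · funext i
      simp only [cubeIdx]
      have h4 : a/4/a = 1/4 := by
        rw [div_div, mul_comm, ← div_div, div_self ha.ne']
      have l1 : ⌊(0:ℝ)/a + 1/2⌋ = 0 := by
        rw [zero_div, zero_add, Int.floor_eq_zero_iff]
        constructor <;> norm_num
      have l2 : ⌊a/4/a + 1/2⌋ = 0 := by
        rw [h4, Int.floor_eq_zero_iff]
        constructor <;> norm_num
      show ⌊(0:ℝ)/a + 1/2⌋ = ⌊a/4/a + 1/2⌋
      rw [l1, l2]
  · rintro t ⟨x, y, hne, hcube, rfl⟩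
    have hdist0 : 0 < dist x y := dist_pos.2 hne
    have hdle : dist x y ≤ a * Real.sqrt d := dist_le_same_cube ha hcube
    have hcore := hA.core (dist x y) hdist0 (hdle.trans haR)
    have hs0 : (0:ℝ) ≤ s := le_trans hd0.le hA.s_ge
    have h1 : φ₀ / (a * Real.sqrt d) ^ s ≤ φ₀ / dist x y ^ s := by
      apply div_le_div_of_nonneg_left hA.phi0_pos.le (Real.rpow_pos_of_pos hdist0 s)
      exact Real.rpow_le_rpow hdist0.le hdle hs0
    have h2 : φ₀ * Real.sqrt d ^ (-s) * a ^ (-s) = φ₀ / (a * Real.sqrt d) ^ s := by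
      rw [Real.mul_rpow ha.le hsd.le, Real.rpow_neg hsd.le, Real.rpow_neg ha.le,
        div_eq_mul_inv, mul_inv]
      ring
    calc φ₀ * Real.sqrt d ^ (-s) * a ^ (-s) = φ₀ / (a * Real.sqrt d) ^ s := h2
      _ ≤ φ₀ / dist x y ^ s := h1
      _ ≤ φ (dist x y) := hcore
      _ ≤ phiPlus φ (dist x y) := le_max_left _ _

/-- Proposition 2.1.  Under Assumption (A) with `s > d` there exists
`a₀ ∈ (0, r₀]` such that for every `0 < a ≤ a₀` one has `v₀(a) < ∞`,
`A(a) = (b(a) - 2v₀(a))/4 > 0`, and the strong superstability inequality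
`U(γ) ≥ A(a)·Σ_{Δ∈Δ̄_a : |γ_Δ|≥2} |γ_Δ|² - (v₀(a)/2)·|γ|` holds for every finite `γ`. -/
theorem strong_superstability_of_assumptionA (d : ℕ) (hd : 1 ≤ d) (φ : ℝ → ℝ)
    (r₀ R φ₀ φ₁ ε₀ s : ℝ) (hA : AssumptionA d φ r₀ R φ₀ φ₁ ε₀ s) (hs : (d : ℝ) < s) :
    ∃ a₀ : ℝ, 0 < a₀ ∧ a₀ ≤ r₀ ∧ ∀ a : ℝ, 0 < a → a ≤ a₀ →
      v0E d φ a < ⊤ ∧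
      0 < (bVal d φ a - 2 * v0Val d φ a) / 4 ∧
      ∀ γ : Finset (Pt d),
        (bVal d φ a - 2 * v0Val d φ a) / 4 * densSum d a γ - v0Val d φ a / 2 * γ.card
          ≤ energy d φ γ := by
  have hd0 : (0:ℝ) < d := by exact_mod_cast hd
  have hr0 : 0 < r₀ := hA.r0_pos
  set ε := min ε₀ ((s - d)/2) with hεdef
  have hε : 0 < ε := lt_min hA.eps0_pos (by linarith)
  have hεε₀ : ε ≤ ε₀ := min_le_left _ _
  have hq : 0 < s - (d:ℝ) - ε := by
    have h := min_le_right ε₀ ((s - d)/2)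
    rw [← hεdef] at h
    linarith
  obtain ⟨K, hK, hKb⟩ := phiMinus_decay hA hε hεε₀
  obtain ⟨C, hC, hCb⟩ := v0E_le_bound hd hε hK hKb
  set q := s - (d:ℝ) - ε with hqdef
  set B := φ₀ * Real.sqrt d ^ (-s) with hBdef
  have hsd : (0:ℝ) < Real.sqrt d := Real.sqrt_pos.2 hd0
  have hB : 0 < B := mul_pos hA.phi0_pos (Real.rpow_pos_of_pos hsd _)
  have hfrac : 0 < B/(2*C+B) := div_pos hB (by linarith)
  set a₀ := min (min 1 (r₀ / Real.sqrt d)) ((B/(2*C+B)) ^ q⁻¹) with ha₀def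
  have ha₀pos : 0 < a₀ :=
    lt_min (lt_min one_pos (div_pos hr0 hsd)) (Real.rpow_pos_of_pos hfrac _)
  have hsd1 : 1 ≤ Real.sqrt d := by
    rw [show (1:ℝ) = Real.sqrt 1 from Real.sqrt_one.symm]
    exact Real.sqrt_le_sqrt (by exact_mod_cast hd)
  have ha₀r₀ : a₀ ≤ r₀ := by
    have h1 : a₀ ≤ r₀ / Real.sqrt d := le_trans (min_le_left _ _) (min_le_right _ _)
    have h2 : r₀ / Real.sqrt d ≤ r₀ := by
      rw [div_le_iff₀ hsd]; nlinarith
    linarith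
  refine ⟨a₀, ha₀pos, ha₀r₀, ?_⟩
  intro a ha haa₀
  have ha1 : a ≤ 1 := le_trans haa₀ (le_trans (min_le_left _ _) (min_le_left _ _))
  have hvle := hCb a ha ha1
  have hvfin : v0E d φ a < ⊤ := lt_of_le_of_lt hvle ENNReal.ofReal_lt_top
  have hvval : v0Val d φ a ≤ C * a ^ (-((d:ℝ) + ε)) := by
    rw [v0Val]
    exact ENNReal.toReal_le_of_le_ofReal
      (mul_nonneg hC.le (Real.rpow_nonneg ha.le _)) hvle
  have haR : a * Real.sqrt d ≤ r₀ := by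
    have h1 : a ≤ r₀ / Real.sqrt d :=
      le_trans haa₀ (le_trans (min_le_left _ _) (min_le_right _ _))
    exact (le_div_iff₀ hsd).1 h1
  have hbge : B * a ^ (-s) ≤ bVal d φ a := bVal_ge hd hA ha haR
  have hkey : 2 * (C * a ^ (-((d:ℝ) + ε))) < B * a ^ (-s) := by
    have hsplit : a ^ (-((d:ℝ) + ε)) = a ^ q * a ^ (-s) := by
      rw [← Real.rpow_add ha]
      congr 1
      rw [hqdef]; ring
    have haq : a ^ q ≤ B/(2*C+B) := by
      have h1 : a ≤ (B/(2*C+B)) ^ q⁻¹ := le_trans haa₀ (min_le_right _ _)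
      have h2 : a ^ q ≤ ((B/(2*C+B)) ^ q⁻¹) ^ q := Real.rpow_le_rpow ha.le h1 hq.le
      rwa [← Real.rpow_mul hfrac.le, inv_mul_cancel₀ (ne_of_gt hq), Real.rpow_one] at h2
    have has : 0 < a ^ (-s) := Real.rpow_pos_of_pos ha _
    calc 2 * (C * a ^ (-((d:ℝ) + ε))) = (2 * C * a ^ q) * a ^ (-s) := by
          rw [hsplit]; ring
      _ ≤ (2 * C * (B/(2*C+B))) * a ^ (-s) := by
          apply mul_le_mul_of_nonneg_right _ has.le
          exact mul_le_mul_of_nonneg_left haq (by linarith)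
      _ < B * a ^ (-s) := by
          apply mul_lt_mul_of_pos_right _ has
          have h3 : 2*C*(B/(2*C+B)) = 2*C*B/(2*C+B) := by ring
          rw [h3, div_lt_iff₀ (by linarith)]
          nlinarith
  have hv2 : 2 * v0Val d φ a < bVal d φ a := by nlinarith [hbge, hkey, hvval]
  have hApos : 0 < (bVal d φ a - 2 * v0Val d φ a)/4 := by linarith
  exact ⟨hvfin, hApos, fun γ => superstab_core ha hvfin.ne γ⟩
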